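/- Let ρ be an n×n positive definite Hermitian matrix. Then the function σ ↦ Tr(ρ log σ) is strictly concave on the set of positive definite n×n Hermitian matrices: for σ ≠ η positive definite and s ∈ (0,1), Tr(ρ((1-s)log σ + s log η)) < Tr(ρ log((1-s)σ + sη)). -/

import Mathlib

open ComplexOrder

open Matrix MeasureTheory Set Filter

/-- Hermitian-ness of real linear combinations of Hermitian complex matrices. -/
lemma isHermitian_smul_add_smul {n : ℕ} {A B : Matrix (Fin n) (Fin n) ℂ}
    (hA : A.IsHermitian) (hB : B.IsHermitian) (a b : ℝ) :
    (a • A + b • B).IsHermitian := by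
  unfold Matrix.IsHermitian at *
  rw [Matrix.conjTranspose_add, Matrix.conjTranspose_smul, Matrix.conjTranspose_smul,
    hA, hB, star_trivial, star_trivial]

/-- The logarithm of a Hermitian matrix, via the spectral decomposition. -/
noncomputable def matLog {n : ℕ} {A : Matrix (Fin n) (Fin n) ℂ} (hA : A.IsHermitian) :
    Matrix (Fin n) (Fin n) ℂ :=
  hA.cfc Real.log

variable {n : ℕ} {A B K M' ρ : Matrix (Fin n) (Fin n) ℂ}

lemma posDef_smul (hA : A.PosDef) {c : ℝ} (hc : 0 < c) : (c • A).PosDef := by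
  rw [Matrix.posDef_iff_dotProduct_mulVec]
  constructor
  · simpa using isHermitian_smul_add_smul hA.1 hA.1 c 0
  · intro x hx
    have h1 : (c • A) *ᵥ x = (c:ℂ) • (A *ᵥ x) := by
      funext i
      simp [Matrix.mulVec, dotProduct, Complex.real_smul, Finset.mul_sum, mul_assoc]
    rw [h1, dotProduct_smul]
    have := hA.dotProduct_mulVec_pos hx
    have hc' : (0:ℂ) < (c:ℂ) := by exact_mod_cast hc
    calc (0:ℂ) = (c:ℂ) * 0 := by ring
      _ < (c:ℂ) * (dotProduct (star x) (A *ᵥ x)) := by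
          exact mul_lt_mul_of_pos_left this hc'
      _ = (c:ℂ) • (dotProduct (star x) (A *ᵥ x)) := rfl

lemma trace_posSemidef_mul_nonneg (hK : K.PosSemidef) (hM' : M'.PosSemidef) :
    0 ≤ (K * M').trace.re := by
  obtain ⟨C, rfl⟩ : ∃ C : Matrix (Fin n) (Fin n) ℂ, K = Cᴴ * C := by
    classical
    open scoped MatrixOrder in
    obtain ⟨X, hX, -, rfl⟩ := CFC.exists_sqrt_of_isSelfAdjoint_of_quasispectrumRestricts
      hK.isHermitian (QuasispectrumRestricts.nnreal_of_nonneg hK.nonneg)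
    exact ⟨X, by rw [← Matrix.star_eq_conjTranspose, hX.star_eq]⟩
  rw [show Cᴴ * C * M' = Cᴴ * (C * M') from mul_assoc _ _ _, Matrix.trace_mul_comm,
    Matrix.trace]
  have hdiag : ∀ i, ((C * M' * Cᴴ) i i)
      = dotProduct (star (fun k => star (C i k))) (M' *ᵥ (fun k => star (C i k))) := by
    intro i
    simp only [Matrix.mul_apply, Matrix.conjTranspose_apply, dotProduct,
      Matrix.mulVec, Pi.star_apply, star_star, Finset.mul_sum, Finset.sum_mul]
    rw [Finset.sum_comm]
    exact Finset.sum_congr rfl fun k _ => Finset.sum_congr rfl fun j _ => by ring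
  rw [Complex.re_sum]
  apply Finset.sum_nonneg
  intro i _
  rw [show (C * M' * Cᴴ).diag i = (C * M' * Cᴴ) i i from rfl, hdiag i]
  simpa [RCLike.re_to_complex] using hM'.re_dotProduct_nonneg (fun k => star (C i k))

lemma trace_posSemidef_mul_pos (hK : K.PosSemidef) (hKne : K ≠ 0) (hM' : M'.PosDef) :
    0 < (K * M').trace.re := by
  obtain ⟨C, rfl⟩ : ∃ C : Matrix (Fin n) (Fin n) ℂ, K = Cᴴ * C := by
    classical
    open scoped MatrixOrder in
    obtain ⟨X, hX, -, rfl⟩ := CFC.exists_sqrt_of_isSelfAdjoint_of_quasispectrumRestricts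
      hK.isHermitian (QuasispectrumRestricts.nnreal_of_nonneg hK.nonneg)
    exact ⟨X, by rw [← Matrix.star_eq_conjTranspose, hX.star_eq]⟩
  have hCne : C ≠ 0 := by
    rintro rfl; simp at hKne
  obtain ⟨i0, k0, hik⟩ : ∃ i k, C i k ≠ 0 := by
    by_contra h
    push_neg at h
    exact hCne (Matrix.ext fun i k => h i k)
  rw [show Cᴴ * C * M' = Cᴴ * (C * M') from mul_assoc _ _ _, Matrix.trace_mul_comm,
    Matrix.trace]
  have hdiag : ∀ i, ((C * M' * Cᴴ) i i)
      = dotProduct (star (fun k => star (C i k))) (M' *ᵥ (fun k => star (C i k))) := by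
    intro i
    simp only [Matrix.mul_apply, Matrix.conjTranspose_apply, dotProduct,
      Matrix.mulVec, Pi.star_apply, star_star, Finset.mul_sum, Finset.sum_mul]
    rw [Finset.sum_comm]
    exact Finset.sum_congr rfl fun k _ => Finset.sum_congr rfl fun j _ => by ring
  rw [Complex.re_sum]
  refine Finset.sum_pos' (fun i _ => ?_) ⟨i0, Finset.mem_univ i0, ?_⟩
  · rw [show (C * M' * Cᴴ).diag i = (C * M' * Cᴴ) i i from rfl, hdiag i]
    simpa [RCLike.re_to_complex] using hM'.posSemidef.re_dotProduct_nonneg (fun k => star (C i k))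
  · rw [show (C * M' * Cᴴ).diag i0 = (C * M' * Cᴴ) i0 i0 from rfl, hdiag i0]
    have hxne : (fun k => star (C i0 k)) ≠ 0 := by
      intro h
      exact hik (by simpa using congrFun h k0)
    simpa [RCLike.re_to_complex] using hM'.re_dotProduct_pos hxne

lemma posDef_mul_inv_cancel (hA : A.PosDef) : A * A⁻¹ = 1 :=
  Matrix.mul_nonsing_inv A (Matrix.isUnit_iff_isUnit_det A |>.mp hA.isUnit)

lemma posDef_inv_mul_cancel (hA : A.PosDef) : A⁻¹ * A = 1 :=
  Matrix.nonsing_inv_mul A (Matrix.isUnit_iff_isUnit_det A |>.mp hA.isUnit)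

lemma conv_inv_trace_pos (hρ : ρ.PosDef) (hA : A.PosDef) (hB : B.PosDef) (hAB : A ≠ B)
    {s : ℝ} (hs0 : 0 < s) (hs1 : s < 1) :
    0 < (ρ * ((1-s) • A⁻¹ + s • B⁻¹ - ((1-s) • A + s • B)⁻¹)).trace.re := by
  have h1s : 0 < 1 - s := by linarith
  set C : Matrix (Fin n) (Fin n) ℂ := (1-s) • A + s • B with hC
  have hCpd : C.PosDef := (posDef_smul hA h1s).add (posDef_smul hB hs0)
  set D : Matrix (Fin n) (Fin n) ℂ := A⁻¹ - B⁻¹ with hD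
  have hDH : D.IsHermitian := hA.inv.1.sub hB.inv.1
  have hDne : D ≠ 0 := by
    intro h
    apply hAB
    have hinv : A⁻¹ = B⁻¹ := by rwa [hD, sub_eq_zero] at h
    calc A = A * (B⁻¹ * B) := by rw [posDef_inv_mul_cancel hB, mul_one]
      _ = A * A⁻¹ * B := by rw [hinv, mul_assoc]
      _ = B := by rw [posDef_mul_inv_cancel hA, one_mul]
  set W : Matrix (Fin n) (Fin n) ℂ := (1-s) • B⁻¹ + s • A⁻¹ with hW
  have hWpd : W.PosDef := (posDef_smul hB.inv h1s).add (posDef_smul hA.inv hs0)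
  set M' : Matrix (Fin n) (Fin n) ℂ := B * C⁻¹ * A with hM'
  have hWM' : W * M' = 1 := by
    have e1 : W * B = A⁻¹ * C := by
      rw [hW, hC, Matrix.add_mul, Matrix.mul_add, Matrix.smul_mul, Matrix.smul_mul,
        Matrix.mul_smul, Matrix.mul_smul, posDef_inv_mul_cancel hB,
        posDef_inv_mul_cancel hA]
    calc W * M' = (W * B) * C⁻¹ * A := by noncomm_ring [hM']
      _ = A⁻¹ * (C * C⁻¹) * A := by rw [e1]; noncomm_ring
      _ = 1 := by rw [posDef_mul_inv_cancel hCpd, mul_one, posDef_inv_mul_cancel hA]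
  have hM'pd : M'.PosDef := by
    have : W⁻¹ = M' := Matrix.inv_eq_right_inv hWM'
    rw [← this]; exact hWpd.inv
  -- the key identity
  have key : (1-s) • A⁻¹ + s • B⁻¹ - C⁻¹ = (s*(1-s)) • (D * M' * D) := by
    have hcanc : ∀ X : Matrix (Fin n) (Fin n) ℂ, A⁻¹ * (A * X * B) * B⁻¹ = X := by
      intro X
      calc A⁻¹ * (A * X * B) * B⁻¹ = (A⁻¹ * A) * X * (B * B⁻¹) := by noncomm_ring
        _ = X := by rw [posDef_inv_mul_cancel hA, posDef_mul_inv_cancel hB, one_mul, mul_one]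
    have hmid : A * ((1-s) • A⁻¹ + s • B⁻¹ - C⁻¹) * B
        = A * ((s*(1-s)) • (D * M' * D)) * B := by
      have lhs_eq : A * ((1-s) • A⁻¹ + s • B⁻¹ - C⁻¹) * B
          = (1-s) • B + s • A - A * C⁻¹ * B := by
        rw [Matrix.mul_sub, Matrix.mul_add, Matrix.sub_mul, Matrix.add_mul,
          Matrix.mul_smul, Matrix.smul_mul, Matrix.mul_smul, Matrix.smul_mul,
          posDef_mul_inv_cancel hA]
        rw [mul_assoc A B⁻¹ B, posDef_inv_mul_cancel hB, one_mul, mul_one, mul_assoc]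
      have rhs_eq : A * ((s*(1-s)) • (D * M' * D)) * B
          = (C - A) * C⁻¹ * (B - C) := by
        have hAD : A * D = (B - A) * B⁻¹ := by
          rw [hD, Matrix.mul_sub, posDef_mul_inv_cancel hA, Matrix.sub_mul,
            posDef_mul_inv_cancel hB]
        have hDB : D * B = A⁻¹ * (B - A) := by
          rw [hD, Matrix.sub_mul, posDef_inv_mul_cancel hB, Matrix.mul_sub,
            posDef_inv_mul_cancel hA]
        have step : A * (D * M' * D) * B = (B - A) * C⁻¹ * (B - A) := by
          calc A * (D * M' * D) * B = (A * D) * M' * (D * B) := by noncomm_ring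
            _ = (B - A) * B⁻¹ * (B * C⁻¹ * A) * (A⁻¹ * (B - A)) := by rw [hAD, hDB, hM']
            _ = (B - A) * (B⁻¹ * B) * C⁻¹ * (A * A⁻¹) * (B - A) := by noncomm_ring
            _ = (B - A) * C⁻¹ * (B - A) := by
                rw [posDef_inv_mul_cancel hB, posDef_mul_inv_cancel hA, mul_one, mul_one]
        have hsmul1 : s • (B - A) = C - A := by
          rw [hC]; module
        have hsmul2 : (1-s) • (B - A) = B - C := by
          rw [hC]; module
        calc A * ((s*(1-s)) • (D * M' * D)) * B
            = (s*(1-s)) • (A * (D * M' * D) * B) := by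
              rw [Matrix.mul_smul, Matrix.smul_mul]
          _ = (s*(1-s)) • ((B - A) * C⁻¹ * (B - A)) := by rw [step]
          _ = (s • (B - A)) * C⁻¹ * ((1-s) • (B - A)) := by
              rw [Matrix.smul_mul, Matrix.smul_mul, Matrix.mul_smul, smul_smul]
          _ = (C - A) * C⁻¹ * (B - C) := by rw [hsmul1, hsmul2]
      rw [lhs_eq, rhs_eq]
      have expand : (C - A) * C⁻¹ * (B - C)
          = C * C⁻¹ * B - C * C⁻¹ * C - A * C⁻¹ * B + A * (C⁻¹ * C) := by noncomm_ring
      rw [expand, posDef_mul_inv_cancel hCpd, posDef_inv_mul_cancel hCpd, one_mul, one_mul,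
        mul_one]
      have hco : (1-s) • B + s • A = A + B - C := by rw [hC]; module
      rw [hco]
      abel
    calc (1-s) • A⁻¹ + s • B⁻¹ - C⁻¹
        = A⁻¹ * (A * ((1-s) • A⁻¹ + s • B⁻¹ - C⁻¹) * B) * B⁻¹ := (hcanc _).symm
      _ = A⁻¹ * (A * ((s*(1-s)) • (D * M' * D)) * B) * B⁻¹ := by rw [hmid]
      _ = (s*(1-s)) • (D * M' * D) := hcanc _
  rw [key]
  -- trace positivity
  have htr : (ρ * ((s*(1-s)) • (D * M' * D))).trace = (s*(1-s)) • ((D * ρ * D) * M').trace := by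
    rw [Matrix.mul_smul, Matrix.trace_smul]
    congr 1
    rw [show ρ * (D * M' * D) = (ρ * D * M') * D by noncomm_ring, Matrix.trace_mul_comm,
      show D * (ρ * D * M') = (D * ρ * D) * M' by noncomm_ring]
  rw [htr, Complex.smul_re]
  have hK : (D * ρ * D).PosSemidef := by
    have := hρ.posSemidef.mul_mul_conjTranspose_same D
    rwa [hDH.eq] at this
  have hKne : D * ρ * D ≠ 0 := by
    intro h
    apply hDne
    obtain ⟨x, hx⟩ : ∃ x, D *ᵥ x ≠ 0 := by
      by_contra hall
      push_neg at hall
      apply hDne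
      ext i j
      have := congrFun (hall (Pi.single j 1)) i
      simpa [Matrix.mulVec_single] using this
    exfalso
    have hpos := hρ.dotProduct_mulVec_pos hx
    have : dotProduct (star (D *ᵥ x)) (ρ *ᵥ (D *ᵥ x)) = 0 := by
      have e : dotProduct (star x) ((D * ρ * D) *ᵥ x)
          = dotProduct (star (D *ᵥ x)) (ρ *ᵥ (D *ᵥ x)) := by
        rw [show D * ρ * D = D * (ρ * D) from mul_assoc _ _ _, ← Matrix.mulVec_mulVec]
        rw [Matrix.dotProduct_mulVec (star x) D]
        congr 1
        · rw [Matrix.star_mulVec, hDH.eq]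
        · rw [Matrix.mulVec_mulVec]
      rw [← e, h]
      simp
    rw [this] at hpos
    exact lt_irrefl _ hpos
  have := trace_posSemidef_mul_pos hK hKne hM'pd
  have hss : 0 < s * (1-s) := mul_pos hs0 h1s
  calc (0:ℝ) = (s*(1-s)) * 0 := by ring
    _ < (s*(1-s)) * ((D * ρ * D) * M').trace.re := by exact mul_lt_mul_of_pos_left this hss
    _ = (s*(1-s)) • ((D * ρ * D) * M').trace.re := rfl

open ComplexOrder Matrix MeasureTheory Set Filter

variable {n : ℕ} {M : Matrix (Fin n) (Fin n) ℂ}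

noncomputable def evU (hM : M.IsHermitian) :
    Matrix (Fin n) (Fin n) ℂ := (Matrix.IsHermitian.eigenvectorUnitary hM : Matrix (Fin n) (Fin n) ℂ)

lemma evU_mul_star (hM : M.IsHermitian) :
    evU hM * star (evU hM) = 1 :=
  (Matrix.mem_unitaryGroup_iff).mp (Matrix.IsHermitian.eigenvectorUnitary hM).2

lemma star_mul_evU (hM : M.IsHermitian) :
    star (evU hM) * evU hM = 1 :=
  (Matrix.mem_unitaryGroup_iff').mp (Matrix.IsHermitian.eigenvectorUnitary hM).2

/-- conjugation of a real diagonal by the eigenvector unitary -/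
noncomputable def conjD (hM : M.IsHermitian) (d : Fin n → ℝ) :
    Matrix (Fin n) (Fin n) ℂ :=
  evU hM * Matrix.diagonal (fun k => (d k : ℂ)) * star (evU hM)

lemma spectral (hM : M.IsHermitian) :
    M = conjD hM hM.eigenvalues := by
  conv_lhs => rw [hM.spectral_theorem]
  rfl

lemma matLog_eq (hM : M.IsHermitian) :
    hM.cfc Real.log = conjD hM (fun k => Real.log (hM.eigenvalues k)) := rfl

lemma conjD_mul (hM : M.IsHermitian) (d e : Fin n → ℝ) :
    conjD hM d * conjD hM e = conjD hM (fun k => d k * e k) := by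
  unfold conjD
  have h1 := star_mul_evU hM
  have : evU hM * Matrix.diagonal (fun k => (d k : ℂ)) * star (evU hM) *
      (evU hM * Matrix.diagonal (fun k => (e k : ℂ)) * star (evU hM))
      = evU hM * (Matrix.diagonal (fun k => (d k : ℂ)) * (star (evU hM) * evU hM) *
        Matrix.diagonal (fun k => (e k : ℂ))) * star (evU hM) := by
    noncomm_ring
  rw [this, h1, mul_one, Matrix.diagonal_mul_diagonal]
  norm_num

lemma conjD_add (hM : M.IsHermitian) (d e : Fin n → ℝ) :
    conjD hM d + conjD hM e = conjD hM (fun k => d k + e k) := by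
  unfold conjD
  rw [← Matrix.add_mul, ← Matrix.mul_add, Matrix.diagonal_add]
  norm_num


lemma diag_cast_smul (c : ℝ) (d : Fin n → ℝ) :
    Matrix.diagonal (fun k => ((c * d k : ℝ) : ℂ)) = c • Matrix.diagonal (fun k => ((d k : ℝ):ℂ)) := by
  ext i j
  by_cases h : i = j <;> simp [Matrix.diagonal_apply, h, Complex.real_smul]

lemma conjD_smul (hM : M.IsHermitian) (c : ℝ) (d : Fin n → ℝ) :
    c • conjD hM d = conjD hM (fun k => c * d k) := by
  unfold conjD
  rw [show (fun k => (((fun k => c * d k) k : ℝ) : ℂ)) = fun k => ((c * d k : ℝ) : ℂ) from rfl,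
    diag_cast_smul, Matrix.mul_smul, Matrix.smul_mul]

lemma conjD_const (hM : M.IsHermitian) (t : ℝ) :
    (t:ℂ) • (1 : Matrix (Fin n) (Fin n) ℂ) = conjD hM (fun _ => t) := by
  unfold conjD
  rw [← Matrix.smul_one_eq_diagonal, Matrix.mul_smul, mul_one, Matrix.smul_mul, evU_mul_star hM]

lemma shift_spectral (hM : M.IsHermitian) (t : ℝ) :
    M + (t:ℂ) • 1 = conjD hM (fun k => hM.eigenvalues k + t) := by
  calc M + (t:ℂ) • 1 = conjD hM hM.eigenvalues + conjD hM (fun _ => t) := by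
        rw [← spectral hM, ← conjD_const hM]
    _ = conjD hM (fun k => hM.eigenvalues k + t) := conjD_add hM _ _

lemma shift_inv {t : ℝ} {hM : M.IsHermitian} (hpos : ∀ k, 0 < hM.eigenvalues k + t) :
    (M + (t:ℂ) • 1)⁻¹ = conjD hM (fun k => (hM.eigenvalues k + t)⁻¹) := by
  apply Matrix.inv_eq_right_inv
  rw [shift_spectral hM t, conjD_mul]
  rw [show (fun k => (hM.eigenvalues k + t) * (hM.eigenvalues k + t)⁻¹) = fun _ => (1:ℝ) by
    funext k; exact mul_inv_cancel₀ (hpos k).ne']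
  unfold conjD
  simp [evU_mul_star hM]


lemma trace_conjD (ρ : Matrix (Fin n) (Fin n) ℂ) (hM : M.IsHermitian) (d : Fin n → ℝ) :
    (ρ * conjD hM d).trace.re
      = ∑ k, d k * ((star (evU hM) * ρ * evU hM) k k).re := by
  unfold conjD
  rw [show ρ * (evU hM * Matrix.diagonal (fun k => (d k:ℂ)) * star (evU hM))
      = (ρ * evU hM * Matrix.diagonal (fun k => (d k:ℂ))) * star (evU hM) by noncomm_ring,
    Matrix.trace_mul_comm,
    show star (evU hM) * (ρ * evU hM * Matrix.diagonal (fun k => (d k:ℂ)))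
      = (star (evU hM) * ρ * evU hM) * Matrix.diagonal (fun k => (d k:ℂ)) by noncomm_ring,
    Matrix.trace]
  rw [show ∀ (X : Matrix (Fin n) (Fin n) ℂ), ∑ k, (X * Matrix.diagonal (fun k => (d k:ℂ))).diag k
      = ∑ k, X k k * (d k : ℂ) from fun X => Finset.sum_congr rfl
      (fun k _ => by simp [Matrix.diag, Matrix.mul_diagonal]), Complex.re_sum]
  exact Finset.sum_congr rfl fun k _ => by simp [Complex.mul_re]; ring

lemma sum_diag_re (ρ : Matrix (Fin n) (Fin n) ℂ) (hM : M.IsHermitian) :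
    ∑ k, ((star (evU hM) * ρ * evU hM) k k).re = ρ.trace.re := by
  have : Matrix.trace (star (evU hM) * ρ * evU hM) = Matrix.trace ρ := by
    rw [Matrix.trace_mul_cycle, evU_mul_star hM, one_mul]
  rw [show ∑ k, ((star (evU hM) * ρ * evU hM) k k).re
      = (Matrix.trace (star (evU hM) * ρ * evU hM)).re by rw [Matrix.trace, Complex.re_sum]; rfl,
    this]
lemma scalar_log_integral {a : ℝ} (ha : 0 < a) :
    IntegrableOn (fun t => (1+t)⁻¹ - (a+t)⁻¹) (Ioi (0:ℝ)) ∧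
      ∫ t in Ioi (0:ℝ), ((1+t)⁻¹ - (a+t)⁻¹) = Real.log a := by
  set F : ℝ → ℝ := fun t => Real.log (1+t) - Real.log (a+t) with hF
  have hderiv : ∀ t ∈ Ici (0:ℝ), HasDerivAt F ((1+t)⁻¹ - (a+t)⁻¹) t := by
    intro t ht
    have h1 : (0:ℝ) < 1 + t := by linarith [ht.out]
    have h2 : (0:ℝ) < a + t := by linarith [ht.out]
    have d1 : HasDerivAt (fun t : ℝ => Real.log (1+t)) (1+t)⁻¹ t := by
      simpa using ((hasDerivAt_id t).const_add 1).log h1.ne'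
    have d2 : HasDerivAt (fun t : ℝ => Real.log (a+t)) (a+t)⁻¹ t := by
      simpa using ((hasDerivAt_id t).const_add a).log h2.ne'
    exact d1.sub d2
  have htends : Tendsto F atTop (nhds 0) := by
    have h1 : Tendsto (fun t : ℝ => 1 + (1-a)/(a+t)) atTop (nhds 1) := by
      have : Tendsto (fun t : ℝ => (1-a)/(a+t)) atTop (nhds 0) :=
        Tendsto.div_atTop tendsto_const_nhds (tendsto_atTop_add_const_left _ a tendsto_id)
      simpa using tendsto_const_nhds.add this
    have h2 : Tendsto (fun t : ℝ => Real.log (1 + (1-a)/(a+t))) atTop (nhds 0) := by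
      have := (Real.continuousAt_log (by norm_num : (1:ℝ) ≠ 0)).tendsto.comp h1
      simpa [Function.comp_def] using this
    refine h2.congr' ?_
    filter_upwards [eventually_gt_atTop 0] with t ht
    have h1' : (0:ℝ) < 1 + t := by linarith
    have h2' : (0:ℝ) < a + t := by linarith
    have : 1 + (1-a)/(a+t) = (1+t)/(a+t) := by field_simp; ring
    rw [this, hF, Real.log_div h1'.ne' h2'.ne']
  have key : IntegrableOn (fun t => (1+t)⁻¹ - (a+t)⁻¹) (Ioi (0:ℝ)) := by
    rcases le_or_gt 1 a with h | h
    · exact integrableOn_Ioi_deriv_of_nonneg' hderiv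
        (fun t ht => by
          have h2 : (0:ℝ) < 1 + t := by linarith [ht.out]
          have : (0:ℝ) < a + t := by linarith [ht.out]
          have : (a+t)⁻¹ ≤ (1+t)⁻¹ := by
            apply inv_anti₀ h2; linarith
          linarith) htends
    · exact integrableOn_Ioi_deriv_of_nonpos' hderiv
        (fun t ht => by
          have h2 : (0:ℝ) < a + t := by linarith [ht.out]
          have : (1+t)⁻¹ ≤ (a+t)⁻¹ := by
            apply inv_anti₀ h2; linarith
          linarith) htends
  refine ⟨key, ?_⟩
  have := integral_Ioi_of_hasDerivAt_of_tendsto' hderiv key htends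
  rw [this]
  simp [hF]


lemma logTrace_integral (ρ : Matrix (Fin n) (Fin n) ℂ) (hM : M.PosDef) :
    IntegrableOn (fun t : ℝ => ρ.trace.re * (1+t)⁻¹ - (ρ * (M + (t:ℂ) • 1)⁻¹).trace.re) (Ioi (0:ℝ)) ∧
    ∫ t in Ioi (0:ℝ), (ρ.trace.re * (1+t)⁻¹ - (ρ * (M + (t:ℂ) • 1)⁻¹).trace.re)
      = (ρ * hM.1.cfc Real.log).trace.re := by
  have hpos : ∀ k, 0 < hM.1.eigenvalues k := hM.eigenvalues_pos
  set lam := hM.1.eigenvalues with hlam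
  set w : Fin n → ℝ := fun k => ((star (evU hM.1) * ρ * evU hM.1) k k).re with hw
  have claim1 : ∀ t ∈ Ioi (0:ℝ),
      ρ.trace.re * (1+t)⁻¹ - (ρ * (M + (t:ℂ) • 1)⁻¹).trace.re
        = ∑ k, w k * ((1+t)⁻¹ - (lam k + t)⁻¹) := by
    intro t ht
    have ht0 : (0:ℝ) < t := ht
    have hpos' : ∀ k, 0 < lam k + t := fun k => by have := hpos k; linarith
    rw [shift_inv hpos', trace_conjD ρ hM.1, ← sum_diag_re ρ hM.1]
    rw [Finset.sum_mul]
    rw [← Finset.sum_sub_distrib]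
    exact Finset.sum_congr rfl fun k _ => by ring
  have claim2 : IntegrableOn (fun t => ∑ k, w k * ((1+t)⁻¹ - (lam k + t)⁻¹)) (Ioi (0:ℝ)) := by
    apply MeasureTheory.integrable_finset_sum
    intro k _
    exact ((scalar_log_integral (hpos k)).1).const_mul (w k)
  have claim3 : ∫ t in Ioi (0:ℝ), ∑ k, w k * ((1+t)⁻¹ - (lam k + t)⁻¹)
      = ∑ k, w k * Real.log (lam k) := by
    rw [MeasureTheory.integral_finset_sum _
      (fun k _ => ((scalar_log_integral (hpos k)).1).const_mul (w k))]
    exact Finset.sum_congr rfl fun k _ => by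
      rw [MeasureTheory.integral_const_mul, (scalar_log_integral (hpos k)).2]
  have hlog : (ρ * hM.1.cfc Real.log).trace.re = ∑ k, w k * Real.log (lam k) := by
    rw [matLog_eq hM.1, trace_conjD ρ hM.1]
    exact Finset.sum_congr rfl fun k _ => by ring
  constructor
  · exact claim2.congr_fun (fun t ht => (claim1 t ht).symm) measurableSet_Ioi
  · rw [MeasureTheory.setIntegral_congr_fun measurableSet_Ioi claim1, claim3, hlog]

section Main

variable {n : ℕ} {ρ X Y Z : Matrix (Fin n) (Fin n) ℂ}

lemma lin2_re (s : ℝ) :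
    (ρ * ((1 - s) • X + s • Y)).trace.re
      = (1 - s) * (ρ * X).trace.re + s * (ρ * Y).trace.re := by
  simp [Matrix.mul_add, Matrix.mul_smul, Matrix.trace_add, Matrix.trace_smul, Complex.add_re,
    Complex.smul_re]

lemma lin3_re (s : ℝ) :
    (ρ * ((1 - s) • X + s • Y - Z)).trace.re
      = (1 - s) * (ρ * X).trace.re + s * (ρ * Y).trace.re - (ρ * Z).trace.re := by
  simp [Matrix.mul_add, Matrix.mul_sub, Matrix.mul_smul, Matrix.trace_add, Matrix.trace_sub,
    Matrix.trace_smul, Complex.add_re, Complex.sub_re, Complex.smul_re]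

lemma shift_posDef {M : Matrix (Fin n) (Fin n) ℂ} (hM : M.PosDef) {t : ℝ} (ht : 0 < t) :
    (M + (t:ℂ) • 1).PosDef := by
  apply hM.add_posSemidef
  rw [Matrix.smul_one_eq_diagonal]
  exact Matrix.PosSemidef.diagonal fun i => by
    simpa using (Complex.zero_le_real (x := t)).mpr ht.le

end Main

theorem stmt_4 {n : ℕ} {ρ σ η : Matrix (Fin n) (Fin n) ℂ}
    (hρ : ρ.PosDef) (hσ : σ.PosDef) (hη : η.PosDef) (hne : σ ≠ η)
    (s : ℝ) (hs0 : 0 < s) (hs1 : s < 1) :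
    (ρ * ((1 - s) • matLog hσ.1 + s • matLog hη.1)).trace.re <
      (ρ * matLog (isHermitian_smul_add_smul hσ.1 hη.1 (1 - s) s)).trace.re := by
  have h1s : 0 < 1 - s := by linarith
  set μ : Matrix (Fin n) (Fin n) ℂ := (1 - s) • σ + s • η with hμdef
  have hμ : μ.PosDef := (posDef_smul hσ h1s).add (posDef_smul hη hs0)
  -- the three integrand functions
  set Fσ : ℝ → ℝ := fun t => ρ.trace.re * (1+t)⁻¹ - (ρ * (σ + (t:ℂ) • 1)⁻¹).trace.re with hFσ
  set Fη : ℝ → ℝ := fun t => ρ.trace.re * (1+t)⁻¹ - (ρ * (η + (t:ℂ) • 1)⁻¹).trace.re with hFη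
  set Fμ : ℝ → ℝ := fun t => ρ.trace.re * (1+t)⁻¹ - (ρ * (μ + (t:ℂ) • 1)⁻¹).trace.re with hFμ
  obtain ⟨hIσ, hEσ⟩ := logTrace_integral ρ hσ
  obtain ⟨hIη, hEη⟩ := logTrace_integral ρ hη
  obtain ⟨hIμ, hEμ⟩ := logTrace_integral ρ hμ
  set h : ℝ → ℝ := fun t => Fμ t - ((1-s) * Fσ t + s * Fη t) with hh
  have hsum : IntegrableOn (fun t => (1-s) * Fσ t + s * Fη t) (Ioi (0:ℝ)) := by
    exact (hIσ.const_mul (1-s)).add (hIη.const_mul s)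
  have hInt : IntegrableOn h (Ioi (0:ℝ)) := by
    exact hIμ.sub hsum
  have hIval : ∫ t in Ioi (0:ℝ), h t
      = (ρ * matLog (isHermitian_smul_add_smul hσ.1 hη.1 (1 - s) s)).trace.re
        - (ρ * ((1 - s) • matLog hσ.1 + s • matLog hη.1)).trace.re := by
    rw [hh]
    rw [MeasureTheory.integral_sub hIμ hsum,
      MeasureTheory.integral_add ((hIσ.const_mul (1-s)) : IntegrableOn (fun t => (1-s) * Fσ t) _ _)
        ((hIη.const_mul s) : IntegrableOn (fun t => s * Fη t) _ _),
      MeasureTheory.integral_const_mul, MeasureTheory.integral_const_mul]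
    rw [hEσ, hEη, hEμ, lin2_re]
    rfl
  -- pointwise positivity
  have hpos : ∀ t ∈ Ioi (0:ℝ), 0 < h t := by
    intro t ht
    have ht0 : (0:ℝ) < t := ht
    have hAt : (σ + (t:ℂ) • 1).PosDef := shift_posDef hσ ht0
    have hBt : (η + (t:ℂ) • 1).PosDef := shift_posDef hη ht0
    have hneq : σ + (t:ℂ) • 1 ≠ η + (t:ℂ) • 1 := fun hcon => hne (by
      have := congrArg (fun X => X - (t:ℂ) • 1) hcon
      simpa using this)
    have hCeq : μ + (t:ℂ) • 1 = (1-s) • (σ + (t:ℂ) • 1) + s • (η + (t:ℂ) • 1) := by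
      rw [hμdef]; module
    have key := conv_inv_trace_pos hρ hAt hBt hneq hs0 hs1
    rw [lin3_re] at key
    have hht : h t = (1-s) * (ρ * (σ + (t:ℂ) • 1)⁻¹).trace.re
        + s * (ρ * (η + (t:ℂ) • 1)⁻¹).trace.re
        - (ρ * ((1-s) • (σ + (t:ℂ) • 1) + s • (η + (t:ℂ) • 1))⁻¹).trace.re := by
      simp only [hh, hFσ, hFη, hFμ]
      rw [hCeq]
      ring
    rw [hht]
    exact key
  -- conclude
  have hsupp : (volume.restrict (Ioi (0:ℝ))) (Function.support h) > 0 := by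
    have hsub : Ioi (0:ℝ) ⊆ Function.support h := fun t ht => (hpos t ht).ne'
    calc (0:ENNReal) < volume.restrict (Ioi (0:ℝ)) (Ioi (0:ℝ)) := by
          rw [Measure.restrict_apply_self, Real.volume_Ioi]
          simp
      _ ≤ volume.restrict (Ioi (0:ℝ)) (Function.support h) := measure_mono hsub
  have hintpos : 0 < ∫ t in Ioi (0:ℝ), h t := by
    rw [MeasureTheory.integral_pos_iff_support_of_nonneg_ae ?_ hInt]
    · exact hsupp
    · exact (ae_restrict_iff' measurableSet_Ioi).mpr (ae_of_all _ fun t ht => (hpos t ht).le)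
  rw [hIval] at hintpos
  linarith
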